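/- Let ω : ℝ → ℝ be a good environment. Then for every c > 0 there exists a standard valley with height c of ω, i.e. a triplet (𝔭_c, 𝔪_c, 𝔮_c) of elements of M_c(ω) with 𝔭_c < 𝔪_c < 𝔮_c such that: 𝔪_c and 0 belong to [𝔭_c, 𝔮_c]; 𝔭_c and 𝔮_c are c-maxima of ω; 𝔪_c is a c-minimum of ω; and 𝔭_c, 𝔪_c, 𝔮_c are successive elements of M_c(ω) (no other c-extremum of ω lies strictly between 𝔭_c and 𝔮_c). -/

import Mathlib

open Filter Set Topology Function

/-- A function `ω : ℝ → ℝ` is càdlàg: right-continuous everywhere, with left limits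
everywhere; `ω(x−)` is then `Function.leftLim ω x`. -/
def Cadlag (ω : ℝ → ℝ) : Prop :=
  (∀ x : ℝ, ContinuousWithinAt ω (Set.Ici x) x) ∧
  (∀ x : ℝ, ∃ l : ℝ, Tendsto ω (𝓝[<] x) (𝓝 l))

/-- `x0` is a left local maximum of `ω`. -/
def LeftLocalMax (ω : ℝ → ℝ) (x0 : ℝ) : Prop :=
  ∃ ε > (0 : ℝ), ∀ x ∈ Set.Ioo (x0 - ε) x0, ω x ≤ Function.leftLim ω x0

/-- `x0` is a right local maximum of `ω`. -/
def RightLocalMax (ω : ℝ → ℝ) (x0 : ℝ) : Prop :=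
  ∃ ε > (0 : ℝ), ∀ x ∈ Set.Ioo x0 (x0 + ε), ω x ≤ ω x0

/-- `x0` is a left local minimum of `ω`. -/
def LeftLocalMin (ω : ℝ → ℝ) (x0 : ℝ) : Prop :=
  ∃ ε > (0 : ℝ), ∀ x ∈ Set.Ioo (x0 - ε) x0, Function.leftLim ω x0 ≤ ω x

/-- `x0` is a right local minimum of `ω`. -/
def RightLocalMin (ω : ℝ → ℝ) (x0 : ℝ) : Prop :=
  ∃ ε > (0 : ℝ), ∀ x ∈ Set.Ioo x0 (x0 + ε), ω x0 ≤ ω x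

/-- `x0` is a local extremum of `ω`. -/
def LocalExtremum (ω : ℝ → ℝ) (x0 : ℝ) : Prop :=
  LeftLocalMax ω x0 ∨ RightLocalMax ω x0 ∨ LeftLocalMin ω x0 ∨ RightLocalMin ω x0

/-- `ω` has a `c`-minimum at `x0`: there are `ξ < x0 < ζ` with
`ω(ξ) ≥ (ω(x0) ∧ ω(x0−)) + c`, `ω(ζ−) ≥ (ω(x0) ∧ ω(x0−)) + c`, and
`ω(x) ∧ ω(x−) > ω(x0) ∧ ω(x0−)` for all `x ∈ (ξ,ζ)`, `x ≠ x0`. -/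
def CMinimum (ω : ℝ → ℝ) (c x0 : ℝ) : Prop :=
  ∃ ξ ζ : ℝ, ξ < x0 ∧ x0 < ζ ∧
    min (ω x0) (Function.leftLim ω x0) + c ≤ ω ξ ∧
    min (ω x0) (Function.leftLim ω x0) + c ≤ Function.leftLim ω ζ ∧
    ∀ x ∈ Set.Ioo ξ ζ, x ≠ x0 →
      min (ω x0) (Function.leftLim ω x0) < min (ω x) (Function.leftLim ω x)

/-- `ω` has a `c`-maximum at `x0` if `−ω` has a `c`-minimum at `x0`. -/
def CMaximum (ω : ℝ → ℝ) (c x0 : ℝ) : Prop :=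
  CMinimum (fun x => -ω x) c x0

/-- `M_c(ω)`, the set of `c`-extrema of `ω`. -/
def CExtrema (ω : ℝ → ℝ) (c : ℝ) : Set ℝ :=
  {x : ℝ | CMinimum ω c x ∨ CMaximum ω c x}


/-- A càdlàg `ω : ℝ → ℝ` is a good environment if
`limsup_{x→±∞} ω(x) = +∞`, `liminf_{x→±∞} ω(x) = −∞`, `ω` is continuous at its local
extrema, and `ω` takes pairwise distinct values at its local extrema. -/
def GoodEnvironment (ω : ℝ → ℝ) : Prop :=
  Cadlag ω ∧
  (∀ M : ℝ, ∃ᶠ x in atTop, M < ω x) ∧ (∀ M : ℝ, ∃ᶠ x in atTop, ω x < M) ∧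
  (∀ M : ℝ, ∃ᶠ x in atBot, M < ω x) ∧ (∀ M : ℝ, ∃ᶠ x in atBot, ω x < M) ∧
  (∀ x0 : ℝ, LocalExtremum ω x0 → ω x0 = Function.leftLim ω x0) ∧
  (∀ x y : ℝ, LocalExtremum ω x → LocalExtremum ω y → x ≠ y → ω x ≠ ω y)

/-- `(p, m, q)` is a standard valley with height `c` of `ω`: `p < m < q`, `m` and `0`
belong to `[p,q]`, `p` and `q` are `c`-maxima, `m` is a `c`-minimum, and they are
successive elements of `M_c(ω)` (no other `c`-extremum lies strictly between `p` and
`q`). -/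
def StandardValley (ω : ℝ → ℝ) (c p m q : ℝ) : Prop :=
  p < m ∧ m < q ∧ p ≤ 0 ∧ 0 ≤ q ∧
  CMaximum ω c p ∧ CMaximum ω c q ∧ CMinimum ω c m ∧
  ∀ z ∈ Set.Ioo p q, z ∈ CExtrema ω c → z = m

section Aux

variable {ω : ℝ → ℝ}

/-- Core structural hypotheses of a good environment. -/
structure GoodCore (ω : ℝ → ℝ) : Prop where
  cadlag : Cadlag ω
  cont : ∀ x0 : ℝ, LocalExtremum ω x0 → ω x0 = Function.leftLim ω x0
  dist : ∀ x y : ℝ, LocalExtremum ω x → LocalExtremum ω y → x ≠ y → ω x ≠ ω y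

lemma nhds_Iio_neBot (x : ℝ) : (𝓝[<] x) ≠ ⊥ :=
  Filter.NeBot.ne inferInstance

lemma lem_L (hc : Cadlag ω) (x : ℝ) : Tendsto ω (𝓝[<] x) (𝓝 (leftLim ω x)) := by
  obtain ⟨l, hl⟩ := hc.2 x
  rwa [leftLim_eq_of_tendsto hl]

lemma lem_L_neg (hc : Cadlag ω) (x : ℝ) :
    leftLim (fun y => -ω y) x = -leftLim ω x :=
  leftLim_eq_of_tendsto ((lem_L hc x).neg)

lemma cadlag_neg (hc : Cadlag ω) : Cadlag (fun y => -ω y) :=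
  ⟨fun x => (hc.1 x).neg, fun x => (hc.2 x).elim fun l hl => ⟨-l, hl.neg⟩⟩

lemma le_leftLim (hc : Cadlag ω) {a x v : ℝ} (hax : a < x)
    (h : ∀ y ∈ Ioo a x, v ≤ ω y) : v ≤ leftLim ω x := by
  refine ge_of_tendsto (lem_L hc x) ?_
  filter_upwards [Ioo_mem_nhdsLT_of_mem (⟨hax, le_refl x⟩ : x ∈ Ioc a x)] using h

lemma leftLim_le (hc : Cadlag ω) {a x v : ℝ} (hax : a < x)
    (h : ∀ y ∈ Ioo a x, ω y ≤ v) : leftLim ω x ≤ v := by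
  refine le_of_tendsto (lem_L hc x) ?_
  filter_upwards [Ioo_mem_nhdsLT_of_mem (⟨hax, le_refl x⟩ : x ∈ Ioc a x)] using h

/-- Right-continuity: if `ω x < v` then `ω < v` on a right neighbourhood. -/
lemma right_window_lt (hc : Cadlag ω) {x v : ℝ} (h : ω x < v) :
    ∃ η > 0, ∀ y ∈ Ico x (x + η), ω y < v := by
  have := hc.1 x (Iio_mem_nhds h)
  rw [mem_map, mem_nhdsGE_iff_exists_Ico_subset] at this
  obtain ⟨u, hu, hsub⟩ := this
  exact ⟨u - x, by simpa using hu, fun y hy => hsub ⟨hy.1, by linarith [hy.2]⟩⟩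

lemma right_window_gt (hc : Cadlag ω) {x v : ℝ} (h : v < ω x) :
    ∃ η > 0, ∀ y ∈ Ico x (x + η), v < ω y := by
  have := hc.1 x (Ioi_mem_nhds h)
  rw [mem_map, mem_nhdsGE_iff_exists_Ico_subset] at this
  obtain ⟨u, hu, hsub⟩ := this
  exact ⟨u - x, by simpa using hu, fun y hy => hsub ⟨hy.1, by linarith [hy.2]⟩⟩

end Aux

section Aux2

variable {ω : ℝ → ℝ}

lemma subseq_lemma (hc : Cadlag ω) {a b : ℝ} (x : ℕ → ℝ) (hx : ∀ n, x n ∈ Set.Icc a b) :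
    ∃ z ∈ Set.Icc a b, ∃ φ : ℕ → ℕ, StrictMono φ ∧
      (Tendsto (fun n => ω (x (φ n))) atTop (𝓝 (ω z)) ∨
        (a < z ∧ Tendsto (fun n => ω (x (φ n))) atTop (𝓝 (leftLim ω z)))) := by
  obtain ⟨z, hz, φ, hφ, hconv⟩ := isCompact_Icc.tendsto_subseq hx
  by_cases hfin : {n | x (φ n) < z}.Infinite
  · obtain ⟨ψ, hψ, hlt⟩ := extraction_of_frequently_atTop (Nat.frequently_atTop_iff_infinite.2 hfin)
    refine ⟨z, hz, φ ∘ ψ, hφ.comp hψ, Or.inr ⟨?_, ?_⟩⟩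
    · exact lt_of_le_of_lt (hx (φ (ψ 0))).1 (hlt 0)
    · have h1 : Tendsto (fun n => x (φ (ψ n))) atTop (𝓝[<] z) := by
        rw [tendsto_nhdsWithin_iff]
        exact ⟨hconv.comp hψ.tendsto_atTop, Eventually.of_forall hlt⟩
      exact (lem_L hc z).comp h1
  · rw [Set.not_infinite] at hfin
    refine ⟨z, hz, φ, hφ, Or.inl ?_⟩
    have hev : ∀ᶠ n in atTop, x (φ n) ∈ Set.Ici z := by
      obtain ⟨N, hN⟩ := hfin.bddAbove
      rw [eventually_atTop]
      exact ⟨N + 1, fun n hn => Set.mem_Ici.2 (not_lt.1 fun hlt =>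
        absurd (hN (show n ∈ {n | x (φ n) < z} from hlt)) (by omega))⟩
    have h1 : Tendsto (fun n => x (φ n)) atTop (𝓝[≥] z) := by
      rw [tendsto_nhdsWithin_iff]
      exact ⟨hconv, hev⟩
    exact Filter.Tendsto.comp (hc.1 z) h1

lemma attain_min (hc : Cadlag ω) {a b : ℝ} (hab : a ≤ b) :
    ∃ x ∈ Set.Icc a b, ∃ v : ℝ,
      (v = ω x ∨ (a < x ∧ v = leftLim ω x)) ∧ ∀ y ∈ Set.Icc a b, v ≤ ω y := by
  have hne : (ω '' Set.Icc a b).Nonempty := ⟨ω a, Set.mem_image_of_mem ω (Set.left_mem_Icc.2 hab)⟩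
  have hbdd : BddBelow (ω '' Set.Icc a b) := by
    by_contra hnb
    have hn : ∀ n : ℕ, ∃ y, y ∈ Set.Icc a b ∧ ω y < -(n : ℝ) := by
      intro n
      rcases not_bddBelow_iff.1 hnb (-(n : ℝ)) with ⟨w, ⟨y, hy, rfl⟩, hlt⟩
      exact ⟨y, hy, hlt⟩
    choose xs hxs hlt using hn
    obtain ⟨z, _, φ, hφ, hcase⟩ := subseq_lemma hc xs hxs
    have hatbot : Tendsto (fun n => ω (xs (φ n))) atTop atBot := by
      refine tendsto_atBot_mono (f := fun n : ℕ => -(n : ℝ)) ?_ ?_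
      · intro n
        have hcast : (n : ℝ) ≤ (φ n : ℝ) := Nat.cast_le.2 hφ.le_apply
        have := (hlt (φ n)).le
        linarith
      · exact tendsto_neg_atTop_atBot.comp tendsto_natCast_atTop_atTop
    rcases hcase with h | ⟨_, h⟩
    · exact not_tendsto_nhds_of_tendsto_atBot hatbot _ h
    · exact not_tendsto_nhds_of_tendsto_atBot hatbot _ h
  set v := sInf (ω '' Set.Icc a b) with hv
  have hlow : ∀ y ∈ Set.Icc a b, v ≤ ω y := fun y hy => csInf_le hbdd ⟨y, hy, rfl⟩
  have hn : ∀ n : ℕ, ∃ y, y ∈ Set.Icc a b ∧ ω y < v + 1 / ((n : ℝ) + 1) := by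
    intro n
    have hpos : (0 : ℝ) < 1 / ((n : ℝ) + 1) := by positivity
    rcases Real.lt_sInf_add_pos hne hpos with ⟨w, ⟨y, hy, rfl⟩, hlt⟩
    exact ⟨y, hy, hlt⟩
  choose xs hxs hlt using hn
  obtain ⟨z, hz, φ, hφ, hcase⟩ := subseq_lemma hc xs hxs
  have hub : Tendsto (fun n : ℕ => v + 1 / ((φ n : ℝ) + 1)) atTop (𝓝 (v + 0)) := by
    refine Tendsto.const_add v ?_
    exact tendsto_one_div_add_atTop_nhds_zero_nat.comp hφ.tendsto_atTop
  rw [add_zero] at hub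
  have hsq : Tendsto (fun n => ω (xs (φ n))) atTop (𝓝 v) := by
    refine tendsto_of_tendsto_of_tendsto_of_le_of_le tendsto_const_nhds hub ?_ ?_
    · exact fun n => hlow _ (hxs (φ n))
    · exact fun n => (hlt (φ n)).le
  rcases hcase with h | ⟨haz, h⟩
  · exact ⟨z, hz, v, Or.inl (tendsto_nhds_unique hsq h), hlow⟩
  · exact ⟨z, hz, v, Or.inr ⟨haz, tendsto_nhds_unique hsq h⟩, hlow⟩

lemma attain_max (hc : Cadlag ω) {a b : ℝ} (hab : a ≤ b) :
    ∃ x ∈ Set.Icc a b, ∃ v : ℝ,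
      (v = ω x ∨ (a < x ∧ v = leftLim ω x)) ∧ ∀ y ∈ Set.Icc a b, ω y ≤ v := by
  obtain ⟨x, hx, v, hform, hlow⟩ := attain_min (cadlag_neg hc) hab
  refine ⟨x, hx, -v, ?_, fun y hy => by linarith [hlow y hy]⟩
  rcases hform with h | ⟨hax, h⟩
  · exact Or.inl (by simp only [h]; ring)
  · refine Or.inr ⟨hax, ?_⟩
    rw [lem_L_neg hc x] at h
    linarith [h]

section Aux3

variable {ω : ℝ → ℝ}

lemma localExtremum_neg (hc : Cadlag ω) {x : ℝ} :
    LocalExtremum (fun y => -ω y) x ↔ LocalExtremum ω x := by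
  have hL : leftLim (fun y => -ω y) x = -leftLim ω x := lem_L_neg hc x
  unfold LocalExtremum LeftLocalMax RightLocalMax LeftLocalMin RightLocalMin
  rw [hL]
  constructor
  · rintro (⟨ε, hε, h⟩ | ⟨ε, hε, h⟩ | ⟨ε, hε, h⟩ | ⟨ε, hε, h⟩)
    · exact Or.inr (Or.inr (Or.inl ⟨ε, hε, fun y hy => by have := h y hy; dsimp only at this ⊢; linarith⟩))
    · exact Or.inr (Or.inr (Or.inr ⟨ε, hε, fun y hy => by have := h y hy; dsimp only at this ⊢; linarith⟩))
    · exact Or.inl ⟨ε, hε, fun y hy => by have := h y hy; dsimp only at this ⊢; linarith⟩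
    · exact Or.inr (Or.inl ⟨ε, hε, fun y hy => by have := h y hy; dsimp only at this ⊢; linarith⟩)
  · rintro (⟨ε, hε, h⟩ | ⟨ε, hε, h⟩ | ⟨ε, hε, h⟩ | ⟨ε, hε, h⟩)
    · exact Or.inr (Or.inr (Or.inl ⟨ε, hε, fun y hy => by have := h y hy; dsimp only at this ⊢; linarith⟩))
    · exact Or.inr (Or.inr (Or.inr ⟨ε, hε, fun y hy => by have := h y hy; dsimp only at this ⊢; linarith⟩))
    · exact Or.inl ⟨ε, hε, fun y hy => by have := h y hy; dsimp only at this ⊢; linarith⟩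
    · exact Or.inr (Or.inl ⟨ε, hε, fun y hy => by have := h y hy; dsimp only at this ⊢; linarith⟩)

lemma GoodCore.neg (hg : GoodCore ω) : GoodCore (fun y => -ω y) where
  cadlag := cadlag_neg hg.cadlag
  cont := fun x0 hx0 => by
    rw [lem_L_neg hg.cadlag x0, neg_inj]
    exact hg.cont x0 ((localExtremum_neg hg.cadlag).1 hx0)
  dist := fun x y hx hy hxy h => by
    exact hg.dist x y ((localExtremum_neg hg.cadlag).1 hx)
      ((localExtremum_neg hg.cadlag).1 hy) hxy (by linarith [h])

/-- An interior point realizing the infimum of a càdlàg function on a compact interval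
is a local extremum, and the function is continuous there. -/
lemma argmin_extremum (hg : GoodCore ω) {a b x v : ℝ} (hax : a < x) (hxb : x < b)
    (hlow : ∀ y ∈ Set.Icc a b, v ≤ ω y) (hfx : min (ω x) (leftLim ω x) ≤ v) :
    LocalExtremum ω x ∧ ω x = v ∧ leftLim ω x = v := by
  have hωx : v ≤ ω x := hlow x ⟨hax.le, hxb.le⟩
  have hLx : v ≤ leftLim ω x :=
    le_leftLim hg.cadlag hax fun y hy => hlow y ⟨hy.1.le, hy.2.le.trans hxb.le⟩
  have hext : LocalExtremum ω x := by
    rcases le_total (leftLim ω x) (ω x) with hle | hle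
    · have hLv : leftLim ω x = v := le_antisymm (by rwa [min_eq_right hle] at hfx) hLx
      refine Or.inr (Or.inr (Or.inl ⟨x - a, by linarith, fun y hy => ?_⟩))
      rw [hLv]
      exact hlow y ⟨by linarith [hy.1], by linarith [hy.2]⟩
    · have hωv : ω x = v := le_antisymm (by rwa [min_eq_left hle] at hfx) hωx
      refine Or.inr (Or.inr (Or.inr ⟨b - x, by linarith, fun y hy => ?_⟩))
      rw [hωv]
      exact hlow y ⟨by linarith [hy.1], by linarith [hy.2]⟩
  have hcont := hg.cont x hext
  have : min (ω x) (leftLim ω x) = ω x := by rw [← hcont, min_self]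
  rw [this] at hfx
  exact ⟨hext, le_antisymm hfx hωx, by rw [← hcont]; exact le_antisymm hfx hωx⟩

lemma argmax_extremum (hg : GoodCore ω) {a b x v : ℝ} (hax : a < x) (hxb : x < b)
    (hhigh : ∀ y ∈ Set.Icc a b, ω y ≤ v) (hgx : v ≤ max (ω x) (leftLim ω x)) :
    LocalExtremum ω x ∧ ω x = v ∧ leftLim ω x = v := by
  have h := argmin_extremum (hg.neg) hax hxb (v := -v)
    (fun y hy => neg_le_neg (hhigh y hy))
    (by rw [lem_L_neg hg.cadlag x]
        rcases le_max_iff.1 hgx with h | h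
        · exact min_le_of_left_le (by linarith)
        · exact min_le_of_right_le (by linarith))
  obtain ⟨hext, h1, h2⟩ := h
  rw [lem_L_neg hg.cadlag x] at h2
  exact ⟨(localExtremum_neg hg.cadlag).1 hext, by linarith, by linarith⟩

/-- A `c`-minimum is a continuity point. -/
lemma cmin_cont (hg : GoodCore ω) {c z : ℝ} (h : CMinimum ω c z) : ω z = leftLim ω z := by
  obtain ⟨ξ, ζ, hξ, hζ, _, _, h3⟩ := h
  rcases le_total (ω z) (leftLim ω z) with hle | hle
  · have hmin : min (ω z) (leftLim ω z) = ω z := min_eq_left hle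
    refine hg.cont z (Or.inr (Or.inr (Or.inr ⟨ζ - z, by linarith, fun y hy => ?_⟩)))
    have := h3 y ⟨hξ.trans hy.1, by linarith [hy.2]⟩ (ne_of_gt hy.1)
    rw [hmin] at this
    exact le_trans this.le (min_le_left _ _)
  · have hmin : min (ω z) (leftLim ω z) = leftLim ω z := min_eq_right hle
    refine hg.cont z (Or.inr (Or.inr (Or.inl ⟨z - ξ, by linarith, fun y hy => ?_⟩)))
    have := h3 y ⟨by linarith [hy.1], hy.2.trans hζ⟩ (ne_of_lt hy.2)
    rw [hmin] at this
    exact le_trans this.le (min_le_left _ _)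

lemma cmax_cont (hg : GoodCore ω) {c z : ℝ} (h : CMaximum ω c z) : ω z = leftLim ω z := by
  have := cmin_cont (hg.neg) h
  rw [lem_L_neg hg.cadlag z] at this
  linarith

end Aux3

section Aux4

variable {ω : ℝ → ℝ}

lemma farmin_right (hg : GoodCore ω)
    (h_hi : ∀ M : ℝ, ∃ᶠ x in atTop, M < ω x) (h_lo : ∀ M : ℝ, ∃ᶠ x in atTop, ω x < M)
    {c : ℝ} (hc : 0 < c) (x₀ : ℝ) : ∃ z, x₀ < z ∧ CMinimum ω c z := by
  set s := x₀ + 1 with hs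
  obtain ⟨t₁, ht₁s, ht₁⟩ := frequently_atTop.mp (h_lo (ω s - c)) (s + 1)
  obtain ⟨t₂, ht₂t₁, ht₂⟩ := frequently_atTop.mp (h_hi (ω t₁ + c)) (t₁ + 1)
  obtain ⟨η, hη, hbar⟩ := right_window_gt hg.cadlag ht₂
  set ζ := t₂ + η / 2 with hζdef
  have hsζ : s ≤ ζ := by dsimp [ζ]; linarith
  obtain ⟨x, hxmem, v, hform, hlow⟩ := attain_min hg.cadlag hsζ
  have hvt₁ : v ≤ ω t₁ := hlow t₁ ⟨by linarith, by dsimp [ζ]; linarith⟩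
  have hbarL : ∀ y ∈ Set.Ioc t₂ ζ, ω t₁ + c ≤ leftLim ω y := by
    intro y hy
    refine le_leftLim hg.cadlag hy.1 fun u hu => (hbar u ⟨hu.1.le, ?_⟩).le
    have : y ≤ ζ := hy.2
    dsimp [ζ] at this; linarith [hu.2]
  have hxs : x ≠ s := by
    rintro rfl
    rcases hform with h | ⟨hax, _⟩
    · linarith
    · exact absurd hax (lt_irrefl _)
  have hxt₂ : x ≤ t₂ := by
    by_contra hgt
    push_neg at hgt
    have h1 : ω t₁ + c < ω x := by
      refine hbar x ⟨hgt.le, ?_⟩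
      have := hxmem.2; dsimp [ζ] at this; linarith
    have h2 : ω t₁ + c ≤ leftLim ω x := hbarL x ⟨hgt, hxmem.2⟩
    rcases hform with h | ⟨_, h⟩
    · linarith
    · linarith
  have hax : s < x := lt_of_le_of_ne hxmem.1 (Ne.symm hxs)
  have hxζ : x < ζ := lt_of_le_of_lt hxt₂ (by dsimp [ζ]; linarith)
  have hfx : min (ω x) (leftLim ω x) ≤ v := by
    rcases hform with h | ⟨_, h⟩
    · exact min_le_of_left_le h.ge
    · exact min_le_of_right_le h.ge
  obtain ⟨hext, hωx, hLx⟩ := argmin_extremum hg hax hxζ hlow hfx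
  have hminx : min (ω x) (leftLim ω x) = v := by rw [hωx, hLx, min_self]
  refine ⟨x, by dsimp [s] at hax; linarith, s, ζ, hax, hxζ, ?_, ?_, ?_⟩
  · rw [hminx]; linarith
  · rw [hminx]
    have := hbarL ζ ⟨by dsimp [ζ]; linarith, le_refl ζ⟩
    linarith
  · intro y hy hne
    rw [hminx]
    have hylow : v ≤ ω y := hlow y ⟨hy.1.le, hy.2.le⟩
    have hyL : v ≤ leftLim ω y :=
      le_leftLim hg.cadlag hy.1 fun u hu => hlow u ⟨hu.1.le, hu.2.le.trans hy.2.le⟩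
    rcases lt_or_ge v (min (ω y) (leftLim ω y)) with h | h
    · exact h
    · exfalso
      have hres := argmin_extremum hg hy.1 hy.2 hlow h
      exact hg.dist y x hres.1 hext hne (by rw [hres.2.1, hωx])

lemma farmin_left (hg : GoodCore ω)
    (h_hi : ∀ M : ℝ, ∃ᶠ x in atBot, M < ω x) (h_lo : ∀ M : ℝ, ∃ᶠ x in atBot, ω x < M)
    {c : ℝ} (hc : 0 < c) (x₀ : ℝ) : ∃ z, z < x₀ ∧ CMinimum ω c z := by
  set s₁ := x₀ - 1 with hs₁
  have hs₁x₀ : s₁ < x₀ := by dsimp [s₁]; linarith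
  obtain ⟨y₀, hy₀mem, v₀, hform₀, hlow₀⟩ := attain_min hg.cadlag hs₁x₀.le
  obtain ⟨t₁, ht₁s, ht₁⟩ := frequently_atBot.mp (h_lo (v₀ - c)) (s₁ - 1)
  obtain ⟨t₂, ht₂t₁, ht₂⟩ := frequently_atBot.mp (h_hi (ω t₁ + c)) (t₁ - 1)
  have horder : t₂ < t₁ ∧ t₁ < s₁ := ⟨by linarith, by linarith⟩
  obtain ⟨x, hxmem, v, hform, hlow⟩ := attain_min hg.cadlag (le_trans horder.1.le (by linarith) : t₂ ≤ x₀)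
  have hvt₁ : v ≤ ω t₁ := hlow t₁ ⟨by linarith, by linarith⟩
  have hvv₀ : v < v₀ - c := lt_of_le_of_lt hvt₁ ht₁
  -- the interval [s₁, x₀] is uniformly above v
  have hmidL : ∀ y ∈ Set.Ioc s₁ x₀, v₀ ≤ leftLim ω y := by
    intro y hy
    exact le_leftLim hg.cadlag hy.1 fun u hu => hlow₀ u ⟨hu.1.le, hu.2.le.trans hy.2⟩
  have hxt₂ : x ≠ t₂ := by
    rintro rfl
    rcases hform with h | ⟨hax, _⟩
    · linarith
    · exact absurd hax (lt_irrefl _)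
  have hxs₁ : x < s₁ := by
    rcases lt_or_ge x s₁ with h | h
    · exact h
    · exfalso
      rcases eq_or_lt_of_le h with heq | hlt
      · -- x = s₁ : then v = ω s₁ ≥ v₀ or v = leftLim ω s₁ with interior argmin
        rcases hform with hf | ⟨htax, hf⟩
        · have : v₀ ≤ ω x := hlow₀ x ⟨h, hxmem.2⟩
          linarith
        · obtain ⟨_, hωx, _⟩ := argmin_extremum hg htax (heq ▸ hs₁x₀ : x < x₀) hlow
            (min_le_of_right_le hf.ge)
          have : v₀ ≤ ω x := hlow₀ x ⟨h, hxmem.2⟩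
          linarith
      · -- x ∈ (s₁, x₀]
        have h1 : v₀ ≤ ω x := hlow₀ x ⟨hlt.le, hxmem.2⟩
        have h2 : v₀ ≤ leftLim ω x := hmidL x ⟨hlt, hxmem.2⟩
        rcases hform with hf | ⟨_, hf⟩
        · linarith
        · linarith
  have htax : t₂ < x := lt_of_le_of_ne hxmem.1 (Ne.symm hxt₂)
  have hxx₀ : x < x₀ := lt_trans hxs₁ hs₁x₀
  have hfx : min (ω x) (leftLim ω x) ≤ v := by
    rcases hform with h | ⟨_, h⟩
    · exact min_le_of_left_le h.ge
    · exact min_le_of_right_le h.ge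
  obtain ⟨hext, hωx, hLx⟩ := argmin_extremum hg htax hxx₀ hlow hfx
  have hminx : min (ω x) (leftLim ω x) = v := by rw [hωx, hLx, min_self]
  refine ⟨x, hxx₀, t₂, x₀, htax, hxx₀, ?_, ?_, ?_⟩
  · rw [hminx]; linarith
  · rw [hminx]
    have := hmidL x₀ ⟨hs₁x₀, le_refl x₀⟩
    linarith
  · intro y hy hne
    rw [hminx]
    have hylow : v ≤ ω y := hlow y ⟨hy.1.le, hy.2.le⟩
    rcases lt_or_ge v (min (ω y) (leftLim ω y)) with h | h
    · exact h
    · exfalso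
      have hres := argmin_extremum hg hy.1 hy.2 hlow h
      exact hg.dist y x hres.1 hext hne (by rw [hres.2.1, hωx])

end Aux4

section Aux5

variable {ω : ℝ → ℝ}

lemma cmax_between (hg : GoodCore ω) {c z₁ z₂ : ℝ} (hcpos : 0 < c)
    (h1 : CMinimum ω c z₁) (h2 : CMinimum ω c z₂) (h12 : z₁ < z₂) :
    ∃ y, y ∈ Set.Ioo z₁ z₂ ∧ CMaximum ω c y := by
  have e₁ : ω z₁ = leftLim ω z₁ := cmin_cont hg h1
  have e₂ : ω z₂ = leftLim ω z₂ := cmin_cont hg h2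
  obtain ⟨ξ₁, ζ₁, hξ₁, hζ₁, hr₁, hl₁, h3₁⟩ := h1
  obtain ⟨ξ₂, ζ₂, hξ₂, hζ₂, hr₂, hl₂, h3₂⟩ := h2
  rw [← e₁, min_self] at hr₁ hl₁
  rw [← e₂, min_self] at hr₂ hl₂
  have hp1 : ∃ sp, sp ∈ Set.Icc z₁ z₂ ∧ ω z₁ + c ≤ max (ω sp) (leftLim ω sp) := by
    rcases le_or_gt ζ₁ z₂ with hcase | hcase
    · exact ⟨ζ₁, ⟨hζ₁.le, hcase⟩, le_trans hl₁ (le_max_right _ _)⟩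
    · have hz₂in : ω z₁ < ω z₂ := by
        have := h3₁ z₂ ⟨lt_trans hξ₁ h12, hcase⟩ (ne_of_gt h12)
        rw [← e₁, min_self, ← e₂, min_self] at this
        exact this
      have hξ₂z₁ : z₁ ≤ ξ₂ := by
        by_contra hlt; push_neg at hlt
        have := h3₂ z₁ ⟨hlt, lt_trans h12 hζ₂⟩ (ne_of_lt h12)
        rw [← e₁, min_self, ← e₂, min_self] at this
        linarith
      refine ⟨ξ₂, ⟨hξ₂z₁, hξ₂.le⟩, le_trans ?_ (le_max_left _ _)⟩
      linarith
  have hp2 : ∃ sp, sp ∈ Set.Icc z₁ z₂ ∧ ω z₂ + c ≤ max (ω sp) (leftLim ω sp) := by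
    rcases le_or_gt z₁ ξ₂ with hcase | hcase
    · exact ⟨ξ₂, ⟨hcase, hξ₂.le⟩, le_trans hr₂ (le_max_left _ _)⟩
    · have hz₁in : ω z₂ < ω z₁ := by
        have := h3₂ z₁ ⟨hcase, lt_trans h12 hζ₂⟩ (ne_of_lt h12)
        rw [← e₁, min_self, ← e₂, min_self] at this
        exact this
      have hζ₁z₂ : ζ₁ ≤ z₂ := by
        by_contra hlt; push_neg at hlt
        have := h3₁ z₂ ⟨lt_trans hξ₁ h12, hlt⟩ (ne_of_gt h12)
        rw [← e₁, min_self, ← e₂, min_self] at this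
        linarith
      refine ⟨ζ₁, ⟨hζ₁.le, hζ₁z₂⟩, le_trans ?_ (le_max_right _ _)⟩
      linarith
  obtain ⟨y, hymem, vq, hform, hhigh⟩ := attain_max hg.cadlag h12.le
  have hgb : ∀ u ∈ Set.Icc z₁ z₂, max (ω u) (leftLim ω u) ≤ vq := by
    intro u hu
    rcases eq_or_lt_of_le hu.1 with heq | hlt
    · have hLu : ω u = leftLim ω u := heq ▸ e₁
      rw [max_le_iff, ← hLu]
      exact ⟨hhigh u hu, hhigh u hu⟩
    · rw [max_le_iff]
      exact ⟨hhigh u hu,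
        leftLim_le hg.cadlag hlt fun w hw => hhigh w ⟨hw.1.le, hw.2.le.trans hu.2⟩⟩
  obtain ⟨sp1, hsp1, hsp1'⟩ := hp1
  obtain ⟨sp2, hsp2, hsp2'⟩ := hp2
  have hvq1 : ω z₁ + c ≤ vq := le_trans hsp1' (hgb sp1 hsp1)
  have hvq2 : ω z₂ + c ≤ vq := le_trans hsp2' (hgb sp2 hsp2)
  have hy1 : z₁ < y := by
    rcases eq_or_lt_of_le hymem.1 with heq | hlt
    · exfalso
      rcases hform with h | ⟨h, _⟩
      · rw [← heq] at h; linarith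
      · rw [← heq] at h; exact absurd h (lt_irrefl _)
    · exact hlt
  have hy2 : y < z₂ := by
    rcases eq_or_lt_of_le hymem.2 with heq | hlt
    · exfalso
      rcases hform with h | ⟨_, h⟩
      · rw [heq] at h; linarith
      · rw [heq, ← e₂] at h; linarith
    · exact hlt
  have hvqmax : vq ≤ max (ω y) (leftLim ω y) := by
    rcases hform with h | ⟨_, h⟩
    · exact le_max_of_le_left h.le
    · exact le_max_of_le_right h.le
  obtain ⟨hext, hωy, hLy⟩ := argmax_extremum hg hy1 hy2 hhigh hvqmax
  have hLneg : ∀ t : ℝ, leftLim (fun x => -ω x) t = -leftLim ω t := lem_L_neg hg.cadlag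
  refine ⟨y, ⟨hy1, hy2⟩, z₁, z₂, hy1, hy2, ?_, ?_, ?_⟩
  · simp only [hLneg, hωy, hLy, min_self]
    linarith
  · simp only [hLneg, hωy, hLy, min_self, ← e₂]
    linarith
  · intro x hx hne
    have hle : max (ω x) (leftLim ω x) ≤ vq := hgb x ⟨hx.1.le, hx.2.le⟩
    have hlt : max (ω x) (leftLim ω x) < vq := by
      rcases lt_or_eq_of_le hle with h | h
      · exact h
      · exfalso
        have hres := argmax_extremum hg hx.1 hx.2 hhigh h.ge
        exact hg.dist x y hres.1 hext hne (by rw [hres.2.1, hωy])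
    simp only [hLneg, hωy, hLy, min_self, min_neg_neg]
    linarith

lemma cmin_between (hg : GoodCore ω) {c z₁ z₂ : ℝ} (hcpos : 0 < c)
    (h1 : CMaximum ω c z₁) (h2 : CMaximum ω c z₂) (h12 : z₁ < z₂) :
    ∃ y, y ∈ Set.Ioo z₁ z₂ ∧ CMinimum ω c y := by
  have hωω : (fun x => -(fun y => -ω y) x) = ω := by funext x; simp
  obtain ⟨y, hy, hmax⟩ := cmax_between (hg.neg) hcpos h1 h2 h12
  refine ⟨y, hy, ?_⟩
  unfold CMaximum at hmax
  rwa [hωω] at hmax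

end Aux5

section Aux6

variable {ω : ℝ → ℝ}

lemma finite_cmin (hg : GoodCore ω) {c : ℝ} (hcpos : 0 < c) (a b : ℝ) :
    ({z | CMinimum ω c z} ∩ Set.Icc a b).Finite := by
  by_contra hinf
  rw [← Set.not_infinite, not_not] at hinf
  obtain ⟨xx, hxx, hacc⟩ :=
    hinf.exists_accPt_of_subset_isCompact isCompact_Icc Set.inter_subset_right
  rw [accPt_iff_nhds] at hacc
  by_cases hleft : ∀ δ, 0 < δ → ∃ y, CMinimum ω c y ∧ y ∈ Set.Ioo (xx - δ) xx
  · -- accumulation from the left: use the left limit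
    set l := leftLim ω xx with hl
    have hev : ∀ᶠ u in 𝓝[<] xx, ω u ∈ Set.Ioo (l - c/5) (l + c/5) :=
      lem_L hg.cadlag xx (Ioo_mem_nhds (by linarith) (by linarith))
    rw [Filter.eventually_iff, mem_nhdsLT_iff_exists_Ioo_subset] at hev
    obtain ⟨u₀, hu₀, hsub⟩ := hev
    have hωb : ∀ u ∈ Set.Ioo u₀ xx, ω u ∈ Set.Ioo (l - c/5) (l + c/5) := fun u hu => hsub hu
    have hLb : ∀ u ∈ Set.Ioo u₀ xx, leftLim ω u ≤ l + c/5 ∧ l - c/5 ≤ leftLim ω u := by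
      intro u hu
      constructor
      · exact leftLim_le hg.cadlag hu.1 fun w hw => (hωb w ⟨hw.1, hw.2.trans hu.2⟩).2.le
      · exact le_leftLim hg.cadlag hu.1 fun w hw => (hωb w ⟨hw.1, hw.2.trans hu.2⟩).1.le
    have key : ∀ w w', CMinimum ω c w → w ∈ Set.Ioo u₀ xx → w' ∈ Set.Ioo u₀ xx → w' ≠ w →
        min (ω w) (leftLim ω w) < min (ω w') (leftLim ω w') := by
      intro w w' hmin hw hw' hne
      obtain ⟨ξ, ζ, hξ, hζ, hr, hlm, h3⟩ := hmin
      have hfw : l - c/5 ≤ min (ω w) (leftLim ω w) :=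
        le_min (hωb w hw).1.le (hLb w hw).2
      have hξu₀ : ξ ≤ u₀ := by
        by_contra hgt; push_neg at hgt
        have : ω ξ < l + c/5 := (hωb ξ ⟨hgt, hξ.trans hw.2⟩).2
        linarith
      have hζxx : xx < ζ := by
        by_contra hle; push_neg at hle
        rcases eq_or_lt_of_le hle with heq | hlt
        · rw [heq] at hlm
          rw [← hl] at hlm
          linarith
        · have : leftLim ω ζ ≤ l + c/5 := (hLb ζ ⟨hw.1.trans hζ, hlt⟩).1
          linarith
      exact h3 w' ⟨lt_of_le_of_lt hξu₀ hw'.1, hw'.2.trans hζxx⟩ hne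
    have hu₀' : u₀ < xx := hu₀
    obtain ⟨z₁, hz₁min, hz₁mem⟩ := hleft (xx - u₀) (by linarith)
    have hz₁ : z₁ ∈ Set.Ioo u₀ xx := ⟨by linarith [hz₁mem.1], hz₁mem.2⟩
    obtain ⟨z₂, hz₂min, hz₂mem⟩ := hleft (xx - z₁) (by linarith [hz₁.2])
    have hz₂ : z₂ ∈ Set.Ioo u₀ xx := ⟨by linarith [hz₂mem.1, hz₁.1], hz₂mem.2⟩
    have hne : z₂ ≠ z₁ := by have := hz₂mem.1; intro h; rw [h] at this; linarith
    have h1 := key z₁ z₂ hz₁min hz₁ hz₂ hne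
    have h2 := key z₂ z₁ hz₂min hz₂ hz₁ (Ne.symm hne)
    linarith
  · -- accumulation from the right: use right-continuity
    push_neg at hleft
    obtain ⟨δ₀, hδ₀, hnone⟩ := hleft
    have hright : ∀ δ, 0 < δ → ∃ y, CMinimum ω c y ∧ y ∈ Set.Ioo xx (xx + δ) := by
      intro δ hδ
      have hmem : Set.Ioo (xx - min δ₀ δ) (xx + min δ₀ δ) ∈ 𝓝 xx :=
        Ioo_mem_nhds (by have := lt_min hδ₀ hδ; linarith) (by have := lt_min hδ₀ hδ; linarith)
      obtain ⟨y, ⟨hyU, hyS, _⟩, hyne⟩ := hacc _ hmem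
      rcases lt_trichotomy y xx with hlt | heq | hgt
      · exfalso
        refine hnone y hyS ⟨?_, hlt⟩
        have h1 := hyU.1; have h2 := min_le_left δ₀ δ; linarith
      · exact absurd heq hyne
      · refine ⟨y, hyS, hgt, ?_⟩
        have h1 := hyU.2; have h2 := min_le_right δ₀ δ; linarith
    obtain ⟨η₁, hη₁, hw₁⟩ := right_window_lt hg.cadlag (show ω xx < ω xx + c/5 by linarith)
    obtain ⟨η₂, hη₂, hw₂⟩ := right_window_gt hg.cadlag (show ω xx - c/5 < ω xx by linarith)
    set η := min η₁ η₂ with hη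
    have hηpos : 0 < η := lt_min hη₁ hη₂
    have hωb : ∀ u ∈ Set.Ioo xx (xx + η), ω u ∈ Set.Ioo (ω xx - c/5) (ω xx + c/5) := by
      intro u hu
      constructor
      · exact hw₂ u ⟨hu.1.le, by have := min_le_right η₁ η₂; linarith [hu.2]⟩
      · exact hw₁ u ⟨hu.1.le, by have := min_le_left η₁ η₂; linarith [hu.2]⟩
    have hLb : ∀ u ∈ Set.Ioo xx (xx + η),
        leftLim ω u ≤ ω xx + c/5 ∧ ω xx - c/5 ≤ leftLim ω u := by
      intro u hu
      constructor
      · exact leftLim_le hg.cadlag hu.1 fun w hw => (hωb w ⟨hw.1, hw.2.trans hu.2⟩).2.le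
      · exact le_leftLim hg.cadlag hu.1 fun w hw => (hωb w ⟨hw.1, hw.2.trans hu.2⟩).1.le
    have key : ∀ w w', CMinimum ω c w → w ∈ Set.Ioo xx (xx + η) → w' ∈ Set.Ioo xx (xx + η) →
        w' ≠ w → min (ω w) (leftLim ω w) < min (ω w') (leftLim ω w') := by
      intro w w' hmin hw hw' hne
      obtain ⟨ξ, ζ, hξ, hζ, hr, hlm, h3⟩ := hmin
      have hfw : ω xx - c/5 ≤ min (ω w) (leftLim ω w) :=
        le_min (hωb w hw).1.le (hLb w hw).2
      have hξxx : ξ < xx := by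
        by_contra hge; push_neg at hge
        rcases eq_or_lt_of_le hge with heq | hlt
        · rw [← heq] at hr; linarith
        · have : ω ξ < ω xx + c/5 := (hωb ξ ⟨hlt, hξ.trans hw.2⟩).2
          linarith
      have hζη : xx + η ≤ ζ := by
        by_contra hgt; push_neg at hgt
        have : leftLim ω ζ ≤ ω xx + c/5 := (hLb ζ ⟨hw.1.trans hζ, hgt⟩).1
        linarith
      exact h3 w' ⟨hξxx.trans hw'.1, lt_of_lt_of_le hw'.2 hζη⟩ hne
    obtain ⟨z₁, hz₁min, hz₁mem⟩ := hright η hηpos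
    obtain ⟨z₂, hz₂min, hz₂mem⟩ := hright (z₁ - xx) (by linarith [hz₁mem.1])
    have hz₂ : z₂ ∈ Set.Ioo xx (xx + η) := ⟨hz₂mem.1, by linarith [hz₂mem.2, hz₁mem.2]⟩
    have hne : z₂ ≠ z₁ := by have := hz₂mem.2; intro h; rw [h] at this; linarith
    have h1 := key z₁ z₂ hz₁min hz₁mem hz₂ hne
    have h2 := key z₂ z₁ hz₂min hz₂ hz₁mem (Ne.symm hne)
    linarith

lemma finite_cmax (hg : GoodCore ω) {c : ℝ} (hcpos : 0 < c) (a b : ℝ) :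
    ({z | CMaximum ω c z} ∩ Set.Icc a b).Finite :=
  finite_cmin hg.neg hcpos a b

lemma finite_extrema (hg : GoodCore ω) {c : ℝ} (hcpos : 0 < c) (a b : ℝ) :
    (CExtrema ω c ∩ Set.Icc a b).Finite := by
  refine Set.Finite.subset ((finite_cmin hg hcpos a b).union (finite_cmax hg hcpos a b)) ?_
  rintro z ⟨hz, hmem⟩
  rcases hz with h | h
  · exact Or.inl ⟨h, hmem⟩
  · exact Or.inr ⟨h, hmem⟩

end Aux6

section Aux7

variable {ω : ℝ → ℝ}

lemma next_extremum (hg : GoodCore ω)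
    (ht1 : ∀ M : ℝ, ∃ᶠ x in atTop, M < ω x) (ht2 : ∀ M : ℝ, ∃ᶠ x in atTop, ω x < M)
    {c : ℝ} (hc : 0 < c) (e : ℝ) :
    ∃ q, q ∈ CExtrema ω c ∧ e < q ∧ ∀ y ∈ CExtrema ω c, e < y → q ≤ y := by
  obtain ⟨z', hz'e, hz'min⟩ := farmin_right hg ht1 ht2 hc e
  have hfin : (CExtrema ω c ∩ Set.Ioc e z').Finite :=
    (finite_extrema hg hc e z').subset (by rintro y ⟨h1, h2⟩; exact ⟨h1, h2.1.le, h2.2⟩)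
  have hne : (CExtrema ω c ∩ Set.Ioc e z').Nonempty := ⟨z', Or.inl hz'min, hz'e, le_refl _⟩
  obtain ⟨q, hqmem, hqmin⟩ := Set.exists_min_image _ id hfin hne
  refine ⟨q, hqmem.1, hqmem.2.1, ?_⟩
  intro y hy hey
  rcases le_or_gt y z' with h | h
  · exact hqmin y ⟨hy, hey, h⟩
  · exact le_trans hqmem.2.2 h.le

lemma prev_extremum (hg : GoodCore ω)
    (hb1 : ∀ M : ℝ, ∃ᶠ x in atBot, M < ω x) (hb2 : ∀ M : ℝ, ∃ᶠ x in atBot, ω x < M)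
    {c : ℝ} (hc : 0 < c) (e : ℝ) :
    ∃ p, p ∈ CExtrema ω c ∧ p < e ∧ ∀ y ∈ CExtrema ω c, y < e → y ≤ p := by
  obtain ⟨z', hz'e, hz'min⟩ := farmin_left hg hb1 hb2 hc e
  have hfin : (CExtrema ω c ∩ Set.Ico z' e).Finite :=
    (finite_extrema hg hc z' e).subset (by rintro y ⟨h1, h2⟩; exact ⟨h1, h2.1, h2.2.le⟩)
  have hne : (CExtrema ω c ∩ Set.Ico z' e).Nonempty := ⟨z', Or.inl hz'min, le_refl _, hz'e⟩
  obtain ⟨p, hpmem, hpmax⟩ := Set.exists_max_image _ id hfin hne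
  refine ⟨p, hpmem.1, hpmem.2.2, ?_⟩
  intro y hy hye
  rcases le_or_gt z' y with h | h
  · exact hpmax y ⟨hy, h, hye⟩
  · exact le_trans h.le hpmem.2.1

end Aux7


/-- Let `ω : ℝ → ℝ` be a good environment.  Then for every `c > 0`
there exists a standard valley with height `c` of `ω`. -/
theorem exists_standardValley
    (ω : ℝ → ℝ) (hgood : GoodEnvironment ω) (c : ℝ) (hc : 0 < c) :
    ∃ p m q : ℝ, StandardValley ω c p m q := by
  obtain ⟨hcad, ht1, ht2, hb1, hb2, hcont, hdist⟩ := hgood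
  have hg : GoodCore ω := ⟨hcad, hcont, hdist⟩
  obtain ⟨zm, hzm0, hzmmin⟩ := farmin_left hg hb1 hb2 hc 0
  have hfinA : (CExtrema ω c ∩ Set.Icc zm 0).Finite := finite_extrema hg hc zm 0
  have hneA : (CExtrema ω c ∩ Set.Icc zm 0).Nonempty :=
    ⟨zm, Or.inl hzmmin, le_refl _, hzm0.le⟩
  obtain ⟨a, haA, haMax⟩ := Set.exists_max_image _ id hfinA hneA
  have haE : a ∈ CExtrema ω c := haA.1
  have hazm : zm ≤ a := haA.2.1
  have ha0 : a ≤ 0 := haA.2.2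
  have hPa : ∀ y, y ∈ CExtrema ω c → a < y → 0 < y := by
    intro y hy hay
    by_contra h0; push_neg at h0
    have : (id y : ℝ) ≤ id a := haMax y ⟨hy, le_trans hazm hay.le, h0⟩
    simp only [id] at this
    linarith
  by_cases hA : CMaximum ω c a
  · -- `a` is a c-maximum: valley is (a, m, q)
    obtain ⟨m, hmE, ham, hmNext⟩ := next_extremum hg ht1 ht2 hc a
    have hm0 : 0 < m := hPa m hmE ham
    have hmMin : CMinimum ω c m := by
      rcases hmE with h | h
      · exact h
      · exfalso
        obtain ⟨y, hy, hymin⟩ := cmin_between hg hc hA h ham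
        have := hmNext y (Or.inl hymin) hy.1
        linarith [hy.2]
    obtain ⟨q, hqE, hmq, hqNext⟩ := next_extremum hg ht1 ht2 hc m
    have hqMax : CMaximum ω c q := by
      rcases hqE with h | h
      · exfalso
        obtain ⟨y, hy, hymax⟩ := cmax_between hg hc hmMin h hmq
        have := hqNext y (Or.inr hymax) hy.1
        linarith [hy.2]
      · exact h
    refine ⟨a, m, q, ham, hmq, ha0, by linarith, hA, hqMax, hmMin, ?_⟩
    intro z hz hzE
    by_contra hne
    rcases lt_or_gt_of_ne hne with hlt | hgt
    · have := hmNext z hzE hz.1; linarith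
    · have := hqNext z hzE hgt; linarith [hz.2]
  · -- `a` is a c-minimum: valley is (p, a, q)
    have hAmin : CMinimum ω c a := by
      rcases haE with h | h
      · exact h
      · exact absurd h hA
    obtain ⟨q, hqE, haq, hqNext⟩ := next_extremum hg ht1 ht2 hc a
    have hq0 : 0 < q := hPa q hqE haq
    have hqMax : CMaximum ω c q := by
      rcases hqE with h | h
      · exfalso
        obtain ⟨y, hy, hymax⟩ := cmax_between hg hc hAmin h haq
        have := hqNext y (Or.inr hymax) hy.1
        linarith [hy.2]
      · exact h
    obtain ⟨p, hpE, hpa, hpPrev⟩ := prev_extremum hg hb1 hb2 hc a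
    have hpMax : CMaximum ω c p := by
      rcases hpE with h | h
      · exfalso
        obtain ⟨y, hy, hymax⟩ := cmax_between hg hc h hAmin hpa
        have := hpPrev y (Or.inr hymax) hy.2
        linarith [hy.1]
      · exact h
    refine ⟨p, a, q, hpa, haq, by linarith, hq0.le, hpMax, hqMax, hAmin, ?_⟩
    intro z hz hzE
    by_contra hne
    rcases lt_or_gt_of_ne hne with hlt | hgt
    · have := hpPrev z hzE hlt; linarith [hz.1]
    · have := hqNext z hzE hgt; linarith [hz.2]
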